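/- A polynomial lemniscate {z : |P(z)| = 1} for a polynomial P of degree n ≥ 2 with at least two distinct roots, all inside the lemniscate, cannot coincide with a circle. -/

import Mathlib

open Complex Polynomial

/-- A polynomial lemniscate `{|P| = 1}`, for `P` of degree `n ≥ 2` with at least two
distinct roots, all lying inside the lemniscate, is never a circle. -/
theorem lemniscate_not_circle
    (n : ℕ) (hn : 2 ≤ n) (a : ℂ) (ha : a ≠ 0) (lam : Fin n → ℂ)
    (hdist : ∃ i j : Fin n, lam i ≠ lam j)
    (hinside : ∀ j, ‖a * ∏ i, (lam j - lam i)‖ < 1) :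
    ∀ (c : ℂ) (r : ℝ), 0 < r →
      {z : ℂ | ‖a * ∏ i, (z - lam i)‖ = 1} ≠ Metric.sphere c r := by
  intro c r hr h
  obtain ⟨i, j, hij⟩ := hdist
  set P₁ : Polynomial ℂ := C a * ∏ k, (X - C (lam k - c)) with hP₁
  set P₂ : Polynomial ℂ := C ((starRingEnd ℂ) a) *
    ∏ k, (C ((r:ℂ)^2) - C ((starRingEnd ℂ) (lam k - c)) * X) with hP₂
  have keyeval : ∀ w : ℂ, ‖w‖ = r → (P₁ * P₂).eval w = w ^ n := by
    intro w hw
    have hmem : c + w ∈ Metric.sphere c r := by simp [Complex.dist_eq, hw]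
    rw [← h] at hmem
    have habs : ‖a * ∏ k, (c + w - lam k)‖ = 1 := hmem
    have hww : w * (starRingEnd ℂ) w = (r:ℂ)^2 := by
      rw [Complex.mul_conj]
      norm_cast
      rw [← hw, Complex.sq_norm]
    have hfac : ∀ k : Fin n, (r:ℂ)^2 - (starRingEnd ℂ) (lam k - c) * w
        = w * (starRingEnd ℂ) (c + w - lam k) := by
      intro k
      simp only [map_sub, map_add]
      ring_nf
      linear_combination -hww
    have h1 : P₁.eval w = a * ∏ k, (c + w - lam k) := by
      simp only [hP₁, eval_mul, eval_C, eval_prod, eval_sub, eval_X]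
      congr 1
      exact Finset.prod_congr rfl fun k _ => by ring
    have h2 : P₂.eval w = w ^ n * (starRingEnd ℂ) (a * ∏ k, (c + w - lam k)) := by
      simp only [hP₂, eval_mul, eval_C, eval_prod, eval_sub, eval_mul, eval_X]
      rw [Finset.prod_congr rfl fun k _ => hfac k, Finset.prod_mul_distrib,
        Finset.prod_const, Finset.card_univ, Fintype.card_fin, map_mul, map_prod]
      ring
    rw [eval_mul, h1, h2]
    set z := a * ∏ k, (c + w - lam k) with hz
    have : z * (starRingEnd ℂ) z = 1 := by
      rw [Complex.mul_conj]
      rw [Complex.normSq_eq_norm_sq, habs]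
      norm_num
    calc z * (w ^ n * (starRingEnd ℂ) z) = w ^ n * (z * (starRingEnd ℂ) z) := by ring
      _ = w ^ n := by rw [this, mul_one]
  have hkey : P₁ * P₂ = X ^ n := by
    have hz : (P₁ * P₂ - X ^ n) = 0 := by
      apply Polynomial.eq_zero_of_infinite_isRoot
      apply Set.Infinite.mono (s := (Metric.sphere (0:ℂ) r))
      · intro w hw
        have : ‖w‖ = r := by simpa [Complex.dist_eq] using hw
        have hk := keyeval w this
        rw [Set.mem_setOf_eq, Polynomial.IsRoot, eval_sub, eval_pow, eval_X, hk, sub_self]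
      · have h1 : IsConnected (Metric.sphere (0:ℂ) r) := by
          apply isConnected_sphere ?_ 0 hr.le
          rw [Complex.rank_real_complex]; norm_num
        apply h1.isPreconnected.infinite_of_nontrivial
        refine ⟨(r:ℂ), by simp [abs_of_nonneg, hr.le], -(r:ℂ),
          by simp [abs_of_nonneg, hr.le], ?_⟩
        intro hrr
        have h2 : (r:ℝ) = 0 := by
          have := congrArg Complex.re hrr
          simp at this; linarith
        exact hr.ne' h2
    linear_combination hz
  have hroot : ∀ k, lam k = c := by
    intro k
    have he : (P₁ * P₂).eval (lam k - c) = 0 := by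
      rw [eval_mul, hP₁, eval_mul, eval_C, eval_prod]
      rw [Finset.prod_eq_zero (Finset.mem_univ k) (by simp)]
      ring
    rw [hkey] at he
    simp only [eval_pow, eval_X] at he
    have := pow_eq_zero_iff (n := n) (by omega) |>.mp he
    linear_combination this
  exact hij (by rw [hroot i, hroot j])
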